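/- If Φ : B → H is a bounded injective linear map from a Banach space to a Hilbert space, and X ⊆ B is compact, then the thickness exponent of Φ(X) in H is at most the thickness exponent of X in B: τ(Φ(X); H) ≤ τ(X; B). -/

import Mathlib

open Filter Metric Set Pointwise Topology

/-- `coverNum X ε` : minimal number of balls of radius `ε` with centres in `X` covering `X`. -/
noncomputable def coverNum {E : Type*} [SeminormedAddCommGroup E] (X : Set E) (ε : ℝ) : ℕ∞ :=
  sInf {n : ℕ∞ | ∃ F : Finset E, ↑F ⊆ X ∧ (X ⊆ ⋃ c ∈ F, Metric.ball c ε) ∧ n = F.card}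

/-- extended logarithm of an extended natural number. -/
noncomputable def elog (n : ℕ∞) : EReal :=
  if n = ⊤ then ⊤ else ((Real.log n.toNat : ℝ) : EReal)

/-- The upper box-counting dimension `d_B(X) = limsup_{ε → 0⁺} log N(X,ε) / (-log ε)`. -/
noncomputable def dimBox {E : Type*} [SeminormedAddCommGroup E] (X : Set E) : EReal :=
  Filter.limsup (fun ε : ℝ => elog (coverNum X ε) / ((-Real.log ε : ℝ) : EReal)) (𝓝[>] 0)

/-- `thickNum X ε` : smallest dimension of a finite-dimensional subspace `V` with
`dist(x, V) ≤ ε` for all `x ∈ X` (`⊤` if none exists). -/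
noncomputable def thickNum {E : Type*} [NormedAddCommGroup E] [NormedSpace ℝ E]
    (X : Set E) (ε : ℝ) : ℕ∞ :=
  sInf {n : ℕ∞ | ∃ V : Submodule ℝ E, FiniteDimensional ℝ V ∧ n = Module.finrank ℝ V ∧
    ∀ x ∈ X, Metric.infDist x (V : Set E) ≤ ε}

/-- The thickness exponent `τ(X) = limsup_{ε → 0⁺} log d(X,ε) / (-log ε)`. -/
noncomputable def thickness {E : Type*} [NormedAddCommGroup E] [NormedSpace ℝ E]
    (X : Set E) : EReal :=
  Filter.limsup (fun ε : ℝ => elog (thickNum X ε) / ((-Real.log ε : ℝ) : EReal)) (𝓝[>] 0)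

/-- `dualThickNum X θ ε` : minimal dimension of a subspace `U ⊆ E*` such that for all
`x, y ∈ X` with `‖x - y‖ ≥ ε` some `φ ∈ U` has `|φ(x-y)| ≥ ε^(1+θ)`. -/
noncomputable def dualThickNum {E : Type*} [NormedAddCommGroup E] [NormedSpace ℝ E]
    (X : Set E) (θ ε : ℝ) : ℕ∞ :=
  sInf {n : ℕ∞ | ∃ U : Submodule ℝ (E →L[ℝ] ℝ), FiniteDimensional ℝ U ∧ n = Module.finrank ℝ U ∧
    ∀ x ∈ X, ∀ y ∈ X, ε ≤ ‖x - y‖ → ∃ φ ∈ U, ε ^ (1 + θ) ≤ |φ (x - y)|}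

noncomputable def dualThickTheta {E : Type*} [NormedAddCommGroup E] [NormedSpace ℝ E]
    (X : Set E) (θ : ℝ) : EReal :=
  Filter.limsup (fun ε : ℝ => elog (dualThickNum X θ ε) / ((-Real.log ε : ℝ) : EReal)) (𝓝[>] 0)

/-- The dual thickness `τ*(X) = lim_{θ → 0⁺} τ*_θ(X)` (the limit exists by monotonicity and
equals the limsup as `θ → 0⁺`). -/
noncomputable def dualThickness {E : Type*} [NormedAddCommGroup E] [NormedSpace ℝ E]
    (X : Set E) : EReal :=
  Filter.limsup (fun θ : ℝ => dualThickTheta X θ) (𝓝[>] 0)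

/-- `sigmaNum X α ε` : minimal dimension of a subspace `V ⊆ E*` such that whenever
`x, y ∈ X` with `‖x - y‖ ≥ ε` there is `Φ ∈ V` with `‖Φ‖ = 1` and `|Φ(x-y)| ≥ α ε`. -/
noncomputable def sigmaNum {E : Type*} [NormedAddCommGroup E] [NormedSpace ℝ E]
    (X : Set E) (α ε : ℝ) : ℕ∞ :=
  sInf {n : ℕ∞ | ∃ V : Submodule ℝ (E →L[ℝ] ℝ), FiniteDimensional ℝ V ∧ n = Module.finrank ℝ V ∧
    ∀ x ∈ X, ∀ y ∈ X, ε ≤ ‖x - y‖ → ∃ Φ ∈ V, ‖Φ‖ = 1 ∧ α * ε ≤ |Φ (x - y)|}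

noncomputable def sigmaExp {E : Type*} [NormedAddCommGroup E] [NormedSpace ℝ E]
    (X : Set E) (α : ℝ) : EReal :=
  Filter.limsup (fun ε : ℝ => elog (sigmaNum X α ε) / ((-Real.log ε : ℝ) : EReal)) (𝓝[>] 0)


section Aux

open Filter Metric Set Topology

lemma elog_nonneg (n : ℕ∞) : 0 ≤ elog n := by
  unfold elog
  split
  · exact le_top
  · exact_mod_cast Real.log_natCast_nonneg _

lemma elog_mono {n m : ℕ∞} (h : n ≤ m) : elog n ≤ elog m := by
  unfold elog
  rcases eq_or_ne m ⊤ with hm | hm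
  · simp [hm]
  · have hn : n ≠ ⊤ := fun h' => hm (top_le_iff.mp (h' ▸ h))
    simp only [hn, hm, if_false]
    have htn : n.toNat ≤ m.toNat := ENat.toNat_le_toNat h hm
    rcases Nat.eq_zero_or_pos n.toNat with h0 | h0
    · rw [h0]
      exact_mod_cast (by simpa using Real.log_natCast_nonneg m.toNat)
    · have : (n.toNat : ℝ) ≤ (m.toNat : ℝ) := by exact_mod_cast htn
      exact_mod_cast Real.log_le_log (by exact_mod_cast h0) this

lemma thickNum_image_le_aux {B H : Type*}
    [NormedAddCommGroup B] [NormedSpace ℝ B]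
    [NormedAddCommGroup H] [NormedSpace ℝ H]
    (Φ : B →L[ℝ] H) (X : Set B) {c : ℝ} (hc : ‖Φ‖ ≤ c) (hc0 : 0 < c) (ε : ℝ) :
    thickNum (Φ '' X) (c * ε) ≤ thickNum X ε := by
  apply sInf_le_sInf_of_isCoinitialFor
  rintro n ⟨V, hV, rfl, hVX⟩
  refine ⟨(Module.finrank ℝ (V.map (Φ : B →ₗ[ℝ] H)) : ℕ∞),
    ⟨V.map (Φ : B →ₗ[ℝ] H), Module.Finite.map V (Φ : B →ₗ[ℝ] H), rfl, ?_⟩, ?_⟩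
  · rintro _ ⟨x, hx, rfl⟩
    have h1 : Metric.infDist x (V : Set B) ≤ ε := hVX x hx
    have hVne : (V : Set B).Nonempty := ⟨0, V.zero_mem⟩
    by_contra hcon
    push_neg at hcon
    set η := Metric.infDist (Φ x) ((V.map (Φ : B →ₗ[ℝ] H) : Submodule ℝ H) : Set H) - c * ε
      with hη
    have hηpos : 0 < η := by simpa [hη, sub_pos] using hcon
    have h2 : Metric.infDist x (V : Set B) < ε + η / c :=
      lt_of_le_of_lt h1 (lt_add_of_pos_right _ (div_pos hηpos hc0))
    obtain ⟨v, hv, hdist⟩ := (Metric.infDist_lt_iff hVne).mp h2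
    have hvmem : Φ v ∈ (V.map (Φ : B →ₗ[ℝ] H) : Set H) := ⟨v, hv, rfl⟩
    have key : Metric.infDist (Φ x) ((V.map (Φ : B →ₗ[ℝ] H) : Submodule ℝ H) : Set H)
        ≤ dist (Φ x) (Φ v) := Metric.infDist_le_dist_of_mem hvmem
    have hΦd : dist (Φ x) (Φ v) ≤ c * dist x v := by
      rw [dist_eq_norm, dist_eq_norm, ← map_sub]
      calc ‖Φ (x - v)‖ ≤ ‖Φ‖ * ‖x - v‖ := Φ.le_opNorm _
        _ ≤ c * ‖x - v‖ := by
            exact mul_le_mul_of_nonneg_right hc (norm_nonneg _)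
    have : Metric.infDist (Φ x) ((V.map (Φ : B →ₗ[ℝ] H) : Submodule ℝ H) : Set H)
        < c * ε + η := by
      calc Metric.infDist (Φ x) ((V.map (Φ : B →ₗ[ℝ] H) : Submodule ℝ H) : Set H)
          ≤ c * dist x v := key.trans hΦd
        _ < c * (ε + η / c) := by
            exact mul_lt_mul_of_pos_left hdist hc0
        _ = c * ε + η := by field_simp
    simp only [hη] at this
    linarith
  · exact_mod_cast Submodule.finrank_map_le (Φ : B →ₗ[ℝ] H) V

lemma map_mul_nhdsWithin_Ioi {c : ℝ} (hc : 0 < c) :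
    Filter.map (fun x : ℝ => c * x) (𝓝[>] (0 : ℝ)) = 𝓝[>] (0 : ℝ) := by
  have h := (Homeomorph.mulLeft₀ c hc.ne').isEmbedding.map_nhdsWithin_eq (Set.Ioi (0 : ℝ)) 0
  have himg : (Homeomorph.mulLeft₀ c hc.ne') '' Set.Ioi (0 : ℝ) = Set.Ioi (0 : ℝ) := by
    rw [Homeomorph.coe_mulLeft₀]
    rw [Set.image_const_mul_Ioi_zero hc]
  rw [himg] at h
  simpa [Homeomorph.coe_mulLeft₀] using h

end Aux

/-- a bounded injective linear map into a Hilbert space does not increase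
the thickness exponent of a compact set. -/
theorem thickness_image_le {B H : Type*}
    [NormedAddCommGroup B] [NormedSpace ℝ B] [CompleteSpace B]
    [NormedAddCommGroup H] [InnerProductSpace ℝ H] [CompleteSpace H]
    (Φ : B →L[ℝ] H) (hΦ : Function.Injective Φ)
    (X : Set B) (hX : IsCompact X) :
    thickness (Φ '' X) ≤ thickness X := by
  classical
  set c : ℝ := max ‖Φ‖ 1 with hcdef
  have hc1 : (1 : ℝ) ≤ c := le_max_right _ _
  have hc0 : (0 : ℝ) < c := lt_of_lt_of_le one_pos hc1
  have hcΦ : ‖Φ‖ ≤ c := le_max_left _ _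
  have hlogc : 0 ≤ Real.log c := Real.log_nonneg hc1
  -- the three functions
  set g : ℝ → EReal := fun ε => elog (thickNum (Φ '' X) ε) / ((-Real.log ε : ℝ) : EReal)
    with hg
  set h : ℝ → EReal := fun ε => elog (thickNum X ε) / ((-Real.log (c * ε) : ℝ) : EReal)
    with hh
  set f : ℝ → EReal := fun ε => elog (thickNum X ε) / ((-Real.log ε : ℝ) : EReal) with hf
  have step1 : thickness (Φ '' X) = Filter.limsup (g ∘ (fun ε => c * ε)) (𝓝[>] (0:ℝ)) := by
    rw [thickness, Filter.limsup_comp, map_mul_nhdsWithin_Ioi hc0]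
  have hev_lt : ∀ᶠ ε in 𝓝[>] (0:ℝ), 0 < ε := eventually_mem_nhdsWithin
  have step2 : Filter.limsup (g ∘ (fun ε => c * ε)) (𝓝[>] (0:ℝ))
      ≤ Filter.limsup h (𝓝[>] (0:ℝ)) := by
    have hio : Set.Ioo (0:ℝ) (1/c) ∈ 𝓝[>] (0:ℝ) :=
      Ioo_mem_nhdsGT_of_mem ⟨le_refl _, by positivity⟩
    have hle : (g ∘ (fun ε => c * ε)) ≤ᶠ[𝓝[>] (0:ℝ)] h := by
      filter_upwards [hio] with ε hε
      simp only [Function.comp_apply, hg, hh]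
      have hnum : elog (thickNum (Φ '' X) (c * ε)) ≤ elog (thickNum X ε) :=
        elog_mono (thickNum_image_le_aux Φ X hcΦ hc0 ε)
      have hcε : c * ε ≤ 1 := by
        rw [← mul_one_div_cancel hc0.ne']
        exact mul_le_mul_of_nonneg_left hε.2.le hc0.le
      have hden : (0:ℝ) ≤ -Real.log (c * ε) :=
        neg_nonneg.mpr (Real.log_nonpos (mul_nonneg hc0.le hε.1.le) hcε)
      exact EReal.div_le_div_right_of_nonneg (by exact_mod_cast hden) hnum
    exact Filter.limsup_le_limsup hle
  have hL0 : (0 : EReal) ≤ Filter.limsup f (𝓝[>] (0:ℝ)) := by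
    refine Filter.le_limsup_of_frequently_le (Filter.Eventually.frequently ?_) (by isBoundedDefault)
    have : Set.Ioo (0:ℝ) 1 ∈ 𝓝[>] (0:ℝ) := Ioo_mem_nhdsGT_of_mem ⟨le_refl _, one_pos⟩
    filter_upwards [this] with ε hε
    simp only [hf]
    apply EReal.div_nonneg (elog_nonneg _)
    have : Real.log ε ≤ 0 := Real.log_nonpos hε.1.le hε.2.le
    exact_mod_cast neg_nonneg.mpr this
  have step3 : Filter.limsup h (𝓝[>] (0:ℝ)) ≤ Filter.limsup f (𝓝[>] (0:ℝ)) := by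
    by_contra hcon
    push_neg at hcon
    obtain ⟨b, hb1, hb2⟩ := EReal.exists_between_coe_real hcon
    obtain ⟨b', hb'1, hb'2⟩ := EReal.exists_between_coe_real hb1
    have hb'0 : (0 : ℝ) < b' := by exact_mod_cast lt_of_le_of_lt hL0 hb'1
    have hbb' : b' < b := by exact_mod_cast hb'2
    have hb0 : (0 : ℝ) < b := lt_trans hb'0 hbb'
    set M : ℝ := max (b * Real.log c / (b - b')) (Real.log c) with hM
    have hMc : Real.log c ≤ M := le_max_right _ _
    have hev1 : ∀ᶠ ε in 𝓝[>] (0:ℝ), Real.log ε < -M - 1 :=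
      Real.tendsto_log_nhdsGT_zero.eventually (Filter.eventually_lt_atBot _)
    have hev2 : ∀ᶠ ε in 𝓝[>] (0:ℝ), f ε < (b' : EReal) :=
      Filter.eventually_lt_of_limsup_lt hb'1
    have key : ∀ᶠ ε in 𝓝[>] (0:ℝ), h ε ≤ (b : EReal) := by
      filter_upwards [hev_lt, hev1, hev2] with ε hεpos hεlog hεf
      have hM0 : 0 ≤ M := le_trans hlogc hMc
      have hd1pos : (0:ℝ) < -Real.log ε := by linarith
      have hlogmul : Real.log (c * ε) = Real.log c + Real.log ε :=
        Real.log_mul hc0.ne' hεpos.ne'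
      have hd2pos : (0:ℝ) < -Real.log (c * ε) := by
        rw [hlogmul]; linarith
      have hnum : elog (thickNum X ε) ≤ ((-Real.log ε : ℝ) : EReal) * (b' : EReal) := by
        have := hεf.le
        rw [hf] at this
        exact (EReal.div_le_iff_le_mul (by exact_mod_cast hd1pos)
          (EReal.coe_ne_top _)).mp this
      have hreal : (-Real.log ε) * b' ≤ (-Real.log (c * ε)) * b := by
        rw [hlogmul]
        have hA : b * Real.log c / (b - b') ≤ M := le_max_left _ _
        have hAA : b * Real.log c ≤ (b - b') * M := by
          rw [div_le_iff₀ (by linarith)] at hA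
          linarith [hA]
        nlinarith [hεlog, hM0, hb0, hbb']
      rw [hh]
      rw [EReal.div_le_iff_le_mul (by exact_mod_cast hd2pos) (EReal.coe_ne_top _)]
      calc elog (thickNum X ε) ≤ ((-Real.log ε : ℝ) : EReal) * (b' : EReal) := hnum
        _ = (((-Real.log ε) * b' : ℝ) : EReal) := by rw [EReal.coe_mul]
        _ ≤ (((-Real.log (c * ε)) * b : ℝ) : EReal) := by exact_mod_cast hreal
        _ = ((-Real.log (c * ε) : ℝ) : EReal) * (b : EReal) := by rw [EReal.coe_mul]
    have : Filter.limsup h (𝓝[>] (0:ℝ)) ≤ (b : EReal) :=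
      Filter.limsup_le_of_le (by isBoundedDefault) key
    exact absurd (lt_of_lt_of_le hb2 this) (lt_irrefl _)
  calc thickness (Φ '' X) = Filter.limsup (g ∘ (fun ε => c * ε)) (𝓝[>] (0:ℝ)) := step1
    _ ≤ Filter.limsup h (𝓝[>] (0:ℝ)) := step2
    _ ≤ Filter.limsup f (𝓝[>] (0:ℝ)) := step3
    _ = thickness X := rfl
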